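/- Comparison of L₂ norms: for every λ ≥ 0 and every bounded measurable f : Ω → ℝ, ‖L_L^{λ,S} f‖₂ ≤ ‖H_L^λ f‖₂ ≤ ‖L_L f‖₂, where L_L^{λ,S} is the Lasso hyperinterpolation with all penalty parameters equal to 1; moreover, when λ = 0 both inequalities are equalities. -/

import Mathlib

open Finset MeasureTheory

/-- The hard thresholding operator: `η_H(a,λ) = a` if `|a| > λ`, else `0`. -/
noncomputable def etaH (a lam : ℝ) : ℝ := if lam < |a| then a else 0

/-- The hyperinterpolation coefficients `α_ℓ = ∑_j w_j f(x_j) p_ℓ(x_j)`. -/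
noncomputable def hyperCoeff {Ω : Type*} {N d : ℕ} (x : Fin N → Ω) (w : Fin N → ℝ)
    (p : Fin d → Ω → ℝ) (f : Ω → ℝ) (ℓ : Fin d) : ℝ :=
  ∑ j : Fin N, w j * f (x j) * p ℓ (x j)

/-- The hard thresholding hyperinterpolation `H_L^λ f = ∑_ℓ η_H(α_ℓ,λ) p_ℓ`. -/
noncomputable def HTH {Ω : Type*} {N d : ℕ} (x : Fin N → Ω) (w : Fin N → ℝ)
    (p : Fin d → Ω → ℝ) (lam : ℝ) (f : Ω → ℝ) : Ω → ℝ :=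
  fun y => ∑ ℓ : Fin d, etaH (hyperCoeff x w p f ℓ) lam * p ℓ y

/-- The `L²(μ)` norm `‖g‖₂ = (∫ g² dμ)^{1/2}`. -/
noncomputable def norm2 {Ω : Type*} [MeasurableSpace Ω] (μ : Measure Ω) (g : Ω → ℝ) : ℝ :=
  Real.sqrt (∫ y, g y ^ 2 ∂μ)

/-- The uniform norm `‖g‖_∞ = sup_{x ∈ Ω} |g(x)|`. -/
noncomputable def normInf {Ω : Type*} (g : Ω → ℝ) : ℝ := ⨆ y, |g y|

/-- The soft thresholding operator `η_S(a,k) = max(0, a−k) + min(0, a+k)`. -/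
noncomputable def etaS (a k : ℝ) : ℝ := max 0 (a - k) + min 0 (a + k)

/-- The hyperinterpolation `L_L f = ∑_ℓ α_ℓ p_ℓ`. -/
noncomputable def hyper {Ω : Type*} {N d : ℕ} (x : Fin N → Ω) (w : Fin N → ℝ)
    (p : Fin d → Ω → ℝ) (f : Ω → ℝ) : Ω → ℝ :=
  fun y => ∑ ℓ : Fin d, hyperCoeff x w p f ℓ * p ℓ y

/-- The Lasso hyperinterpolation with unit penalty parameters,
`L_L^{λ,S} f = ∑_ℓ η_S(α_ℓ,λ) p_ℓ`. -/
noncomputable def lassoHyper {Ω : Type*} {N d : ℕ} (x : Fin N → Ω) (w : Fin N → ℝ)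
    (p : Fin d → Ω → ℝ) (lam : ℝ) (f : Ω → ℝ) : Ω → ℝ :=
  fun y => ∑ ℓ : Fin d, etaS (hyperCoeff x w p f ℓ) lam * p ℓ y

/-- comparison of `L₂` norms,
`‖L_L^{λ,S} f‖₂ ≤ ‖H_L^λ f‖₂ ≤ ‖L_L f‖₂`, with equalities when `λ = 0`. -/
lemma etaH_abs_le (a lam : ℝ) : |etaH a lam| ≤ |a| := by
  unfold etaH; split_ifs <;> simp [abs_nonneg]

lemma etaS_abs_le (a lam : ℝ) (hl : 0 ≤ lam) : |etaS a lam| ≤ |etaH a lam| := by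
  unfold etaS etaH
  split_ifs with h
  · rcases abs_cases a with ⟨he, ha⟩ | ⟨he, ha⟩
    · rw [he] at h
      rw [max_eq_right (by linarith), min_eq_left (by linarith)]
      rw [abs_of_nonneg (by linarith : (0:ℝ) ≤ a - lam + 0), abs_of_nonneg (by linarith)]
      linarith
    · rw [he] at h
      rw [max_eq_left (by linarith), min_eq_right (by linarith)]
      rw [abs_of_nonpos (by linarith : (0:ℝ) + (a + lam) ≤ 0), abs_of_nonpos (by linarith)]
      linarith
  · push_neg at h
    obtain ⟨h1, h2⟩ := abs_le.mp h
    rw [max_eq_left (by linarith), min_eq_left (by linarith)]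
    simp

lemma etaS_zero (a : ℝ) : etaS a 0 = a := by
  unfold etaS
  rcases le_total a 0 with h | h
  · rw [max_eq_left (by linarith), min_eq_right (by linarith)]; ring
  · rw [max_eq_right (by linarith), min_eq_left (by linarith)]; ring

lemma etaH_zero (a : ℝ) : etaH a 0 = a := by
  unfold etaH
  split_ifs with h
  · rfl
  · push_neg at h
    have : a = 0 := abs_eq_zero.mp (le_antisymm h (abs_nonneg a))
    simp [this]

lemma integral_sq_sum {Ω : Type*} [MeasurableSpace Ω]
    (μ : Measure Ω) {d : ℕ}
    (p : Fin d → Ω → ℝ) (hpm : ∀ ℓ, Measurable (p ℓ))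
    (hL2 : ∀ i k : Fin d, ∫ y, p i y * p k y ∂μ = if i = k then (1 : ℝ) else 0)
    (c : Fin d → ℝ) :
    ∫ y, (∑ ℓ : Fin d, c ℓ * p ℓ y) ^ 2 ∂μ = ∑ ℓ : Fin d, c ℓ ^ 2 := by
  have hsq : ∀ i : Fin d, Integrable (fun y => p i y * p i y) μ := by
    intro i
    by_contra h
    have := hL2 i i
    rw [MeasureTheory.integral_undef h] at this
    simp at this
  have hmul : ∀ i k : Fin d, Integrable (fun y => p i y * p k y) μ := by
    intro i k
    apply Integrable.mono' (((hsq i).add (hsq k)).div_const 2)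
      (((hpm i).mul (hpm k)).aestronglyMeasurable)
    filter_upwards with y
    simp only [Pi.add_apply, Pi.mul_apply, Real.norm_eq_abs, abs_mul]
    nlinarith [sq_nonneg (|p i y| - |p k y|), abs_nonneg (p i y), abs_nonneg (p k y),
      sq_abs (p i y), sq_abs (p k y)]
  have hexp : ∀ y, (∑ ℓ : Fin d, c ℓ * p ℓ y) ^ 2
      = ∑ i : Fin d, ∑ k : Fin d, (c i * c k) * (p i y * p k y) := by
    intro y
    rw [sq, Finset.sum_mul_sum]
    exact Finset.sum_congr rfl fun i _ => Finset.sum_congr rfl fun k _ => by ring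
  simp_rw [hexp]
  rw [MeasureTheory.integral_finset_sum _ (fun i _ =>
    MeasureTheory.integrable_finset_sum _ (fun k _ => (hmul i k).const_mul _))]
  have : ∀ i : Fin d, ∫ y, ∑ k : Fin d, (c i * c k) * (p i y * p k y) ∂μ = c i ^ 2 := by
    intro i
    rw [MeasureTheory.integral_finset_sum _ (fun k _ => (hmul i k).const_mul _)]
    simp_rw [MeasureTheory.integral_const_mul, hL2]
    simp [sq]
  simp_rw [this]

theorem lasso_HTH_hyper_norm_comparison {Ω : Type*} [MeasurableSpace Ω]
    (μ : Measure Ω) [IsFiniteMeasure μ]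
    {N d : ℕ} (hN : 0 < N) (hd : 0 < d)
    (x : Fin N → Ω) (w : Fin N → ℝ) (hw : ∀ j, 0 < w j)
    (p : Fin d → Ω → ℝ) (hpm : ∀ ℓ, Measurable (p ℓ))
    (hL2 : ∀ i k : Fin d, ∫ y, p i y * p k y ∂μ = if i = k then (1 : ℝ) else 0)
    (f : Ω → ℝ) (hfm : Measurable f) (hfb : ∃ M, ∀ y, |f y| ≤ M)
    (lam : ℝ) (hlam : 0 ≤ lam) :
    (norm2 μ (lassoHyper x w p lam f) ≤ norm2 μ (HTH x w p lam f)
        ∧ norm2 μ (HTH x w p lam f) ≤ norm2 μ (hyper x w p f))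
      ∧ (lam = 0 →
          norm2 μ (lassoHyper x w p lam f) = norm2 μ (HTH x w p lam f)
            ∧ norm2 μ (HTH x w p lam f) = norm2 μ (hyper x w p f)) := by
  set α := hyperCoeff x w p f with hα
  have hL : norm2 μ (lassoHyper x w p lam f)
      = Real.sqrt (∑ ℓ : Fin d, (etaS (α ℓ) lam) ^ 2) := by
    unfold norm2 lassoHyper
    rw [integral_sq_sum μ p hpm hL2]
  have hH : norm2 μ (HTH x w p lam f)
      = Real.sqrt (∑ ℓ : Fin d, (etaH (α ℓ) lam) ^ 2) := by
    unfold norm2 HTH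
    rw [integral_sq_sum μ p hpm hL2]
  have hY : norm2 μ (hyper x w p f)
      = Real.sqrt (∑ ℓ : Fin d, (α ℓ) ^ 2) := by
    unfold norm2 hyper
    rw [integral_sq_sum μ p hpm hL2]
  have key : ∀ u v : ℝ, |u| ≤ |v| → u ^ 2 ≤ v ^ 2 := by
    intro u v h
    rw [← sq_abs u, ← sq_abs v]
    exact pow_le_pow_left₀ (abs_nonneg _) h 2
  constructor
  · constructor
    · rw [hL, hH]
      exact Real.sqrt_le_sqrt (Finset.sum_le_sum fun ℓ _ =>
        key _ _ (etaS_abs_le _ _ hlam))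
    · rw [hH, hY]
      exact Real.sqrt_le_sqrt (Finset.sum_le_sum fun ℓ _ =>
        key _ _ (etaH_abs_le _ _))
  · intro h0
    subst h0
    rw [hL, hH, hY]
    simp_rw [etaS_zero, etaH_zero]
    simp
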